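/- Functional characterization of the Cheeger constant k': Define k' = inf { J(A × Aᶜ)/π(A) : 0 < π(A) ≤ 1/2 }. Then k' = inf { (1/2)∬ J(dx,dy)|f(x) − f(y)| : f ∈ L¹₊(π), min_{c∈ℝ} π(|f − c|) = 1 }. -/

import Mathlib

open MeasureTheory Set ENNReal Filter Topology

private lemma coarea_stmt7 {X : Type*} [MeasurableSpace X] (ν : Measure X) [SigmaFinite ν]
    {g h : X → ℝ} (hg : Measurable g) (hh : Measurable h) :
    ∫⁻ x, ENNReal.ofReal (g x - h x) ∂ν
      = ∫⁻ t, ν {x | h x ≤ t ∧ t < g x} := by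

  have hmeas : MeasurableSet {q : X × ℝ | h q.1 ≤ q.2 ∧ q.2 < g q.1} :=
    ((measurableSet_le (hh.comp measurable_fst) measurable_snd).inter
      (measurableSet_lt measurable_snd (hg.comp measurable_fst)))
  calc ∫⁻ x, ENNReal.ofReal (g x - h x) ∂ν
      = ∫⁻ x, ∫⁻ t, {q : X × ℝ | h q.1 ≤ q.2 ∧ q.2 < g q.1}.indicator 1 (x, t) ∂volume ∂ν := by
        congr 1; funext x
        rw [show (fun t => ({q : X × ℝ | h q.1 ≤ q.2 ∧ q.2 < g q.1}).indicator 1 (x, t))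
            = (Set.Ico (h x) (g x)).indicator (1 : ℝ → ℝ≥0∞) from ?_]
        · rw [lintegral_indicator_one measurableSet_Ico, Real.volume_Ico]
        · funext t; by_cases hc : h x ≤ t ∧ t < g x <;>
            simp [Set.indicator_apply, Set.mem_Ico, hc]
    _ = ∫⁻ t, ∫⁻ x, {q : X × ℝ | h q.1 ≤ q.2 ∧ q.2 < g q.1}.indicator 1 (x, t) ∂ν ∂volume :=
        lintegral_lintegral_swap ((measurable_one.indicator hmeas).aemeasurable)
    _ = ∫⁻ t, ν {x | h x ≤ t ∧ t < g x} := by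
        congr 1; funext t
        rw [show (fun x => ({q : X × ℝ | h q.1 ≤ q.2 ∧ q.2 < g q.1}).indicator 1 (x, t))
            = ({x | h x ≤ t ∧ t < g x}).indicator (1 : X → ℝ≥0∞) from ?_]
        · exact lintegral_indicator_one
            ((measurableSet_le hh measurable_const).inter (measurableSet_lt measurable_const hg))
        · funext x; by_cases hc : h x ≤ t ∧ t < g x <;> simp [Set.indicator_apply, hc]

/-- Functional characterization of the Cheeger constant `k'`:
`k' = inf { (1/2)∬ |f(x)−f(y)| dJ : f ∈ L¹₊(π), min_c π(|f−c|) = 1 }`. -/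
theorem stmt7 {E : Type*} [MeasurableSpace E] (π : Measure E) [IsProbabilityMeasure π]
    (J : Measure (E × E)) (hsym : Measure.map Prod.swap J = J)
    (hdiag : J {p : E × E | p.1 = p.2} = 0) :
    (⨅ A ∈ {A : Set E | MeasurableSet A ∧ 0 < π A ∧ π A ≤ 1 / 2}, J (A ×ˢ Aᶜ) / π A)
      = ⨅ f ∈ {f : E → ℝ | Measurable f ∧ (∀ x, 0 ≤ f x) ∧ Integrable f π ∧
            (⨅ c : ℝ, ∫ x, |f x - c| ∂π) = 1},
          (1 / 2 : ℝ≥0∞) * ∫⁻ p, ENNReal.ofReal |f p.1 - f p.2| ∂J := by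
  apply le_antisymm
  · -- hard direction
    have hswap : ∀ {B C : Set E}, MeasurableSet B → MeasurableSet C → J (B ×ˢ C) = J (C ×ˢ B) := by
      intro B C hB hC
      conv_lhs => rw [← hsym]
      rw [Measure.map_apply measurable_swap (hB.prod hC)]
      congr 1
      ext p
      simp [Set.mem_prod, and_comm]
    set K := ⨅ A ∈ {A : Set E | MeasurableSet A ∧ 0 < π A ∧ π A ≤ 1 / 2}, J (A ×ˢ Aᶜ) / π A
      with hKdef
    refine le_iInf₂ fun f hf => ?_
    obtain ⟨hfm, hf0, hfi, hfinf⟩ := hf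
    by_cases hI : ∫⁻ p, ENNReal.ofReal |f p.1 - f p.2| ∂J = ∞
    · rw [hI, ENNReal.mul_top (by norm_num)]; exact le_top
    -- median
    set S : Set ℝ := {t | π {x | t < f x} ≤ 1 / 2} with hS
    have hSne : S.Nonempty := by
      have h1 : Tendsto (fun n : ℕ => π {x | (n : ℝ) < f x}) atTop
          (𝓝 (π (⋂ n : ℕ, {x | (n : ℝ) < f x}))) := by
        apply tendsto_measure_iInter_atTop
        · exact fun n => (measurableSet_lt measurable_const hfm).nullMeasurableSet
        · intro i j hij x hx
          exact lt_of_le_of_lt (Nat.cast_le (α := ℝ) |>.mpr hij) hx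
        · exact ⟨0, measure_ne_top _ _⟩
      have h2 : (⋂ n : ℕ, {x : E | (n : ℝ) < f x}) = ∅ := by
        ext x
        simp only [Set.mem_iInter, Set.mem_setOf_eq, Set.mem_empty_iff_false, iff_false, not_forall,
          not_lt]
        obtain ⟨n, hn⟩ := exists_nat_gt (f x)
        exact ⟨n, hn.le⟩
      rw [h2, measure_empty] at h1
      obtain ⟨n, hn⟩ := (h1.eventually_lt_const (by norm_num : (0 : ℝ≥0∞) < 1 / 2)).exists
      exact ⟨n, hn.le⟩
    have hSbd : BddBelow S := by
      refine ⟨0, fun t ht => le_of_not_gt fun h => ?_⟩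
      have huniv : {x : E | t < f x} = univ :=
        Set.eq_univ_of_forall fun x => lt_of_lt_of_le h (hf0 x)
      rw [hS] at ht
      simp only [Set.mem_setOf_eq, huniv, measure_univ] at ht
      exact absurd ht (ENNReal.half_lt_self one_ne_zero one_ne_top).not_ge
    set m := sInf S with hm
    -- key bounds
    have key1 : ∀ t : ℝ, m < t →
        K * π {x | t < f x} ≤ J ({x | t < f x} ×ˢ {x | t < f x}ᶜ) := by
      intro t ht
      rcases eq_or_ne (π {x | t < f x}) 0 with h0 | h0
      · rw [h0, mul_zero]; exact zero_le
      obtain ⟨s, hsS, hst⟩ := exists_lt_of_csInf_lt hSne ht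
      have hle : π {x | t < f x} ≤ 1 / 2 :=
        le_trans (measure_mono fun x hx => hst.trans hx) hsS
      have hK : K ≤ J ({x | t < f x} ×ˢ {x | t < f x}ᶜ) / π {x | t < f x} :=
        iInf₂_le _ ⟨measurableSet_lt measurable_const hfm, h0.bot_lt, hle⟩
      exact (ENNReal.le_div_iff_mul_le (Or.inl h0) (Or.inl (measure_ne_top π _))).mp hK
    have key2 : ∀ t : ℝ, t < m →
        K * π {x | f x ≤ t} ≤ J ({x | t < f x} ×ˢ {x | t < f x}ᶜ) := by
      intro t ht
      have hcompl : {x : E | t < f x}ᶜ = {x | f x ≤ t} := by ext x; simp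
      rcases eq_or_ne (π {x | f x ≤ t}) 0 with h0 | h0
      · rw [h0, mul_zero]; exact zero_le
      have htS : t ∉ S := notMem_of_lt_csInf ht hSbd
      have hhalf : 1 / 2 ≤ π {x | t < f x} := le_of_not_ge htS
      have hle : π {x | f x ≤ t} ≤ 1 / 2 := by
        have hsum : π {x | f x ≤ t} + π {x | t < f x} = 1 := by
          rw [← hcompl]
          rw [add_comm, measure_add_measure_compl (measurableSet_lt measurable_const hfm)]
          exact measure_univ
        have : π {x | f x ≤ t} + 1 / 2 ≤ 1 / 2 + 1 / 2 := by
          rw [ENNReal.add_halves]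
          calc π {x | f x ≤ t} + 1 / 2 ≤ π {x | f x ≤ t} + π {x | t < f x} :=
                add_le_add le_rfl hhalf
            _ = 1 := hsum
        exact (ENNReal.add_le_add_iff_right (by norm_num)).mp this
      have hK : K ≤ J ({x | f x ≤ t} ×ˢ {x | f x ≤ t}ᶜ) / π {x | f x ≤ t} :=
        iInf₂_le _ ⟨measurableSet_le hfm measurable_const, h0.bot_lt, hle⟩
      have := (ENNReal.le_div_iff_mul_le (Or.inl h0) (Or.inl (measure_ne_top π _))).mp hK
      refine this.trans (le_of_eq ?_)
      rw [← hcompl, compl_compl, hswap (measurableSet_lt measurable_const hfm).compl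
        (measurableSet_lt measurable_const hfm)]
    -- sigma-finiteness of restricted J
    set D : Set (E × E) := {p | f p.2 < f p.1} with hD
    have hdiff : Measurable fun p : E × E => f p.1 - f p.2 :=
      (hfm.comp measurable_fst).sub (hfm.comp measurable_snd)
    have hDm : MeasurableSet D := measurableSet_lt (hfm.comp measurable_snd) (hfm.comp measurable_fst)
    have hP : ∫⁻ p, ENNReal.ofReal (f p.1 - f p.2) ∂J ≠ ∞ :=
      ne_top_of_le_ne_top hI (lintegral_mono fun p => ENNReal.ofReal_le_ofReal (le_abs_self _))
    have hsf : SigmaFinite (J.restrict D) := by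
      refine ⟨⟨⟨fun n => {p : E × E | 1 / ((n : ℝ) + 1) < f p.1 - f p.2} ∪ Dᶜ,
        fun n => trivial, fun n => ?_, ?_⟩⟩⟩
      · have hsm : MeasurableSet {p : E × E | 1 / ((n : ℝ) + 1) < f p.1 - f p.2} :=
          measurableSet_lt measurable_const hdiff
        have hε0 : ENNReal.ofReal (1 / ((n : ℝ) + 1)) ≠ 0 :=
          (ENNReal.ofReal_pos.mpr (by positivity)).ne'
        calc J.restrict D ({p : E × E | 1 / ((n : ℝ) + 1) < f p.1 - f p.2} ∪ Dᶜ)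
            ≤ J.restrict D {p : E × E | 1 / ((n : ℝ) + 1) < f p.1 - f p.2} + J.restrict D Dᶜ :=
              measure_union_le _ _
          _ = J.restrict D {p : E × E | 1 / ((n : ℝ) + 1) < f p.1 - f p.2} := by
              rw [Measure.restrict_apply hDm.compl, Set.compl_inter_self, measure_empty, add_zero]
          _ ≤ J {p : E × E | 1 / ((n : ℝ) + 1) < f p.1 - f p.2} := by
              rw [Measure.restrict_apply hsm]; exact measure_mono Set.inter_subset_left
          _ ≤ J {p : E × E | ENNReal.ofReal (1 / ((n : ℝ) + 1))
                ≤ ENNReal.ofReal (f p.1 - f p.2)} :=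
              measure_mono fun p hp => ENNReal.ofReal_le_ofReal (le_of_lt hp)
          _ ≤ (∫⁻ p, ENNReal.ofReal (f p.1 - f p.2) ∂J) / ENNReal.ofReal (1 / ((n : ℝ) + 1)) :=
              meas_ge_le_lintegral_div hdiff.ennreal_ofReal.aemeasurable hε0 ENNReal.ofReal_ne_top
          _ < ∞ := ENNReal.div_lt_top hP hε0
      · ext p
        simp only [Set.mem_iUnion, Set.mem_union, Set.mem_setOf_eq, Set.mem_univ, iff_true]
        by_cases hp : p ∈ D
        · obtain ⟨n, hn⟩ := exists_nat_one_div_lt (sub_pos.mpr (show f p.2 < f p.1 from hp))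
          exact ⟨n, Or.inl hn⟩
        · exact ⟨0, Or.inr hp⟩
    -- coarea_stmt7 for J
    have hsplit : ∫⁻ p, ENNReal.ofReal (f p.1 - f p.2) ∂J
        = ∫⁻ t, J ({x | t < f x} ×ˢ {x | t < f x}ᶜ) := by
      have hzero : ∫⁻ p in Dᶜ, ENNReal.ofReal (f p.1 - f p.2) ∂J = 0 := by
        rw [setLIntegral_congr_fun hDm.compl (fun p hp => ?_), lintegral_zero]
        · exact ENNReal.ofReal_eq_zero.mpr (sub_nonpos.mpr (not_lt.mp hp))
      have h1 : ∫⁻ p, ENNReal.ofReal (f p.1 - f p.2) ∂J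
          = ∫⁻ p in D, ENNReal.ofReal (f p.1 - f p.2) ∂J := by
        rw [← lintegral_add_compl (fun p => ENNReal.ofReal (f p.1 - f p.2)) hDm, hzero, add_zero]
      rw [h1, coarea_stmt7 (J.restrict D) (show Measurable fun p : E × E => f p.1 from hfm.comp measurable_fst)
        (show Measurable fun p : E × E => f p.2 from hfm.comp measurable_snd)]
      congr 1
      funext t
      rw [Measure.restrict_apply (show MeasurableSet {x : E × E | f x.2 ≤ t ∧ t < f x.1} from
        (measurableSet_le (hfm.comp measurable_snd) measurable_const).inter
        (measurableSet_lt measurable_const (hfm.comp measurable_fst)))]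
      congr 1
      ext p
      simp only [Set.mem_inter_iff, Set.mem_setOf_eq, Set.mem_prod, Set.mem_compl_iff, hD]
      constructor
      · rintro ⟨⟨h1', h2'⟩, _⟩; exact ⟨h2', not_lt.mpr h1'⟩
      · rintro ⟨h1', h2'⟩; exact ⟨⟨not_lt.mp h2', h1'⟩, lt_of_le_of_lt (not_lt.mp h2') h1'⟩
    -- coarea_stmt7 for π, around m
    have hπ1 : ∫⁻ x, ENNReal.ofReal (f x - m) ∂π = ∫⁻ t in Ioi m, π {x | t < f x} := by
      rw [coarea_stmt7 π hfm measurable_const, Measure.restrict_congr_set Ioi_ae_eq_Ici,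
        ← lintegral_indicator measurableSet_Ici]
      congr 1
      funext t
      by_cases ht : m ≤ t
      · rw [Set.indicator_of_mem (show t ∈ Ici m from ht)]
        congr 1
        ext x
        simp [ht]
      · rw [Set.indicator_of_notMem (show t ∉ Ici m from ht)]
        have : {x : E | m ≤ t ∧ t < f x} = ∅ := by
          ext x; simp only [Set.mem_setOf_eq, Set.mem_empty_iff_false, iff_false]
          exact fun hc => ht hc.1
        rw [this, measure_empty]
    have hπ2 : ∫⁻ x, ENNReal.ofReal (m - f x) ∂π = ∫⁻ t in Iio m, π {x | f x ≤ t} := by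
      rw [coarea_stmt7 π measurable_const hfm, ← lintegral_indicator measurableSet_Iio]
      congr 1
      funext t
      by_cases ht : t < m
      · rw [Set.indicator_of_mem (show t ∈ Iio m from ht)]
        congr 1
        ext x
        simp [ht]
      · rw [Set.indicator_of_notMem (show t ∉ Iio m from ht)]
        have : {x : E | f x ≤ t ∧ t < m} = ∅ := by
          ext x; simp only [Set.mem_setOf_eq, Set.mem_empty_iff_false, iff_false]
          exact fun hc => ht hc.2
        rw [this, measure_empty]
    have habs : ∫⁻ x, ENNReal.ofReal |f x - m| ∂π
        = ∫⁻ x, ENNReal.ofReal (f x - m) ∂π + ∫⁻ x, ENNReal.ofReal (m - f x) ∂π := by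
      rw [← lintegral_add_left (show Measurable fun x => ENNReal.ofReal (f x - m) from (hfm.sub measurable_const).ennreal_ofReal)]
      congr 1
      funext x
      rcases le_or_gt m (f x) with h | h
      · rw [abs_of_nonneg (sub_nonneg.mpr h), ENNReal.ofReal_eq_zero.mpr (sub_nonpos.mpr h),
          add_zero]
      · rw [abs_of_neg (sub_neg.mpr h), ENNReal.ofReal_eq_zero.mpr (sub_nonpos.mpr h.le), zero_add,
          neg_sub]
    have hone : (1 : ℝ≥0∞) ≤ ∫⁻ x, ENNReal.ofReal |f x - m| ∂π := by
      have hint : Integrable (fun x => |f x - m|) π := (hfi.sub (integrable_const m)).abs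
      rw [← ofReal_integral_eq_lintegral_ofReal hint (ae_of_all _ fun x => abs_nonneg _)]
      have hb : BddBelow (Set.range fun c : ℝ => ∫ x, |f x - c| ∂π) :=
        ⟨0, by rintro y ⟨c, rfl⟩; exact integral_nonneg fun x => abs_nonneg _⟩
      have h1 : (1 : ℝ) ≤ ∫ x, |f x - m| ∂π := hfinf ▸ ciInf_le hb m
      calc (1 : ℝ≥0∞) = ENNReal.ofReal 1 := by norm_num
        _ ≤ _ := ENNReal.ofReal_le_ofReal h1
    -- final chain
    have hhalf : (1 / 2 : ℝ≥0∞) * ∫⁻ p, ENNReal.ofReal |f p.1 - f p.2| ∂J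
        = ∫⁻ p, ENNReal.ofReal (f p.1 - f p.2) ∂J := by
      have hd : ∫⁻ p, ENNReal.ofReal |f p.1 - f p.2| ∂J
          = ∫⁻ p, ENNReal.ofReal (f p.1 - f p.2) ∂J
            + ∫⁻ p, ENNReal.ofReal (f p.2 - f p.1) ∂J := by
        rw [← lintegral_add_left hdiff.ennreal_ofReal]
        congr 1
        funext p
        rcases le_or_gt (f p.2) (f p.1) with h | h
        · rw [abs_of_nonneg (sub_nonneg.mpr h), ENNReal.ofReal_eq_zero.mpr (sub_nonpos.mpr h),
            add_zero]
        · rw [abs_of_neg (sub_neg.mpr h), ENNReal.ofReal_eq_zero.mpr (sub_nonpos.mpr h.le), zero_add,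
            neg_sub]
      have hsw : ∫⁻ p, ENNReal.ofReal (f p.2 - f p.1) ∂J
          = ∫⁻ p, ENNReal.ofReal (f p.1 - f p.2) ∂J := by
        conv_rhs => rw [← hsym]
        rw [lintegral_map hdiff.ennreal_ofReal measurable_swap]
        rfl
      rw [hd, hsw, ← two_mul, ← mul_assoc, one_div,
        ENNReal.inv_mul_cancel two_ne_zero ENNReal.ofNat_ne_top, one_mul]
    rw [hhalf, hsplit]
    calc K = K * 1 := (mul_one K).symm
      _ ≤ K * ∫⁻ x, ENNReal.ofReal |f x - m| ∂π := mul_le_mul_right hone K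
      _ = (K * ∫⁻ t in Iio m, π {x | f x ≤ t}) + K * ∫⁻ t in Ioi m, π {x | t < f x} := by
          rw [habs, hπ1, hπ2, mul_add, add_comm]
      _ ≤ (∫⁻ t in Iio m, K * π {x | f x ≤ t}) + ∫⁻ t in Ioi m, K * π {x | t < f x} := by
          exact add_le_add (lintegral_const_mul_le _ _) (lintegral_const_mul_le _ _)
      _ ≤ (∫⁻ t in Iio m, J ({x | t < f x} ×ˢ {x | t < f x}ᶜ))
            + ∫⁻ t in Ioi m, J ({x | t < f x} ×ˢ {x | t < f x}ᶜ) := by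
          refine add_le_add (lintegral_mono_ae ?_) (lintegral_mono_ae ?_)
          · exact (ae_restrict_iff' measurableSet_Iio).mpr (ae_of_all _ fun t ht => key2 t ht)
          · exact (ae_restrict_iff' measurableSet_Ioi).mpr (ae_of_all _ fun t ht => key1 t ht)
      _ ≤ (∫⁻ t in Iio m, J ({x | t < f x} ×ˢ {x | t < f x}ᶜ))
            + ∫⁻ t in Ici m, J ({x | t < f x} ×ˢ {x | t < f x}ᶜ) :=
          add_le_add le_rfl (lintegral_mono_set Ioi_subset_Ici_self)
      _ = ∫⁻ t, J ({x | t < f x} ×ˢ {x | t < f x}ᶜ) := by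
          rw [← compl_Iio, lintegral_add_compl _ measurableSet_Iio]
  · -- easy direction
    have hswap : ∀ {B C : Set E}, MeasurableSet B → MeasurableSet C → J (B ×ˢ C) = J (C ×ˢ B) := by
      intro B C hB hC
      conv_lhs => rw [← hsym]
      rw [Measure.map_apply measurable_swap (hB.prod hC)]
      congr 1
      ext p
      simp [Set.mem_prod, and_comm]
    refine le_iInf₂ fun A hA => ?_
    obtain ⟨hAm, hA0, hA2⟩ := hA
    have hAne : π A ≠ ∞ := (lt_of_le_of_lt hA2 (by norm_num)).ne
    set a : ℝ := (π A).toReal with ha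
    have ha0 : 0 < a := ENNReal.toReal_pos hA0.ne' hAne
    have ha2 : a ≤ 1 / 2 := by
      have := ENNReal.toReal_mono (by norm_num) hA2
      simpa using this
    set f : E → ℝ := A.indicator (fun _ => a⁻¹) with hf
    have hfm : Measurable f := measurable_const.indicator hAm
    have hb : (π Aᶜ).toReal = 1 - a := by
      rw [measure_compl hAm (measure_ne_top π A), measure_univ,
        ENNReal.toReal_sub_of_le prob_le_one one_ne_top]
      simp [ha]
    have hcalc : ∀ c : ℝ, ∫ x, |f x - c| ∂π = |a⁻¹ - c| * a + |c| * (1 - a) := by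
      intro c
      have hpt : (fun x => |f x - c|)
          = fun x => A.indicator (fun _ => |a⁻¹ - c|) x + Aᶜ.indicator (fun _ => |c|) x := by
        funext x
        by_cases hx : x ∈ A <;> simp [hf, Set.indicator_apply, hx]
      rw [hpt, integral_add ((integrable_const _).indicator hAm)
          ((integrable_const _).indicator hAm.compl),
        integral_indicator_const _ hAm, integral_indicator_const _ hAm.compl, measureReal_def, measureReal_def, hb, ← ha]
      simp [mul_comm]
    have hone : ∀ c : ℝ, (1 : ℝ) ≤ |a⁻¹ - c| * a + |c| * (1 - a) := by
      intro c
      have hinv : a⁻¹ * a = 1 := inv_mul_cancel₀ ha0.ne'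
      rcases le_or_gt 0 c with hc | hc
      · nlinarith [le_abs_self (a⁻¹ - c), abs_of_nonneg hc]
      · nlinarith [le_abs_self (a⁻¹ - c), abs_of_neg hc]
    have hinf : (⨅ c : ℝ, ∫ x, |f x - c| ∂π) = 1 := by
      apply le_antisymm
      · have hbdd : BddBelow (Set.range fun c : ℝ => ∫ x, |f x - c| ∂π) :=
          ⟨0, by rintro y ⟨c, rfl⟩; exact integral_nonneg fun x => abs_nonneg _⟩
        refine le_trans (ciInf_le hbdd 0) ?_
        rw [hcalc 0]
        simp [abs_of_pos (inv_pos.mpr ha0), inv_mul_cancel₀ ha0.ne']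
      · exact le_ciInf fun c => by rw [hcalc c]; exact hone c
    refine iInf₂_le_of_le f ⟨hfm, fun x => Set.indicator_nonneg (fun _ _ => by positivity) x,
      (integrable_const _).indicator hAm, hinf⟩ ?_
    -- value computation
    have hpt : (fun p : E × E => ENNReal.ofReal |f p.1 - f p.2|)
        = fun p => (A ×ˢ Aᶜ).indicator (fun _ => ENNReal.ofReal a⁻¹) p
            + (Aᶜ ×ˢ A).indicator (fun _ => ENNReal.ofReal a⁻¹) p := by
      funext p
      by_cases h1 : p.1 ∈ A <;> by_cases h2 : p.2 ∈ A <;>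
        simp [hf, Set.indicator_apply, Set.mem_prod, h1, h2, abs_of_nonneg (inv_nonneg.mpr ha0.le),
          abs_of_nonpos (neg_nonpos.mpr (inv_nonneg.mpr ha0.le))]
    rw [hpt, lintegral_add_left (measurable_const.indicator (hAm.prod hAm.compl)),
      lintegral_indicator (hAm.prod hAm.compl), lintegral_indicator (hAm.compl.prod hAm),
      setLIntegral_const, setLIntegral_const, hswap hAm.compl hAm]
    have hofr : ENNReal.ofReal a⁻¹ = (π A)⁻¹ := by
      rw [ENNReal.ofReal_inv_of_pos ha0, ENNReal.ofReal_toReal hAne]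
    apply le_of_eq
    rw [hofr, ← two_mul, ← mul_assoc, one_div,
      ENNReal.inv_mul_cancel two_ne_zero ENNReal.ofNat_ne_top, one_mul, ENNReal.div_eq_inv_mul]
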